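/- arXiv:1501.00072 — 3 statements merged into one kernel-verified Lean document; each statement's English description precedes it below -/
import Mathlib

section
/- Let F*A be a twisted group algebra of a finitely generated free abelian group A over a field F, and suppose the center of F*A is exactly F. Let C be a subgroup of A which contains a subgroup C₀ of finite index such that F*C₀ is commutative. If M is a nonzero finitely generated F*A-module which is finitely generated as an F*C-module, then M is torsion-free as an F*C-module, i.e. no nonzero element of M is annihilated by a nonzero element of F*C. -/
open Module Filter ENNReal

/-- A twisted group algebra `F*A` of the (additive) abelian group `A` over the field `F`:
the `F`-algebra `R` is free as an `F`-module with basis `{of a : a ∈ A}`, the basis elements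
multiply according to a 2-cocycle with values in `Fˣ`, and the scalars of `F` are central
(built into the `Algebra F R` structure). -/
structure TwistedGroupAlgebra (F : Type*) [Field F] (A : Type*) [AddCommGroup A]
    (R : Type*) [Ring R] [Algebra F R] where
  of : A → R
  basis : Basis A F R
  basis_eq : ∀ a : A, basis a = of a
  cocycle : A → A → Fˣ
  of_mul : ∀ a b : A, of a * of b = (cocycle a b : F) • of (a + b)
  of_zero : of 0 = 1

namespace TwistedGroupAlgebra

variable {F A R : Type*} [Field F] [AddCommGroup A] [Ring R] [Algebra F R]

/-- The subalgebra `F*C` of `F*A` determined by a subgroup `C ≤ A`, as the `F`-linear span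
of the basis elements coming from `C`. -/
def sub (T : TwistedGroupAlgebra F A R) (C : AddSubgroup A) : Submodule F R :=
  Submodule.span F (T.of '' (C : Set A))

/-- `F*C` is commutative. -/
def IsCommutativeOn (T : TwistedGroupAlgebra F A R) (C : AddSubgroup A) : Prop :=
  ∀ c₁ ∈ C, ∀ c₂ ∈ C, Commute (T.of c₁) (T.of c₂)

/-- `M` is finitely generated as an `F*C`-module: there is a finite subset `s` of `M` such that
the `F`-span of `{ c̄ • m : c ∈ C, m ∈ s }` (that is, the `F*C`-submodule generated by `s`)
is all of `M`. -/
def FGOn (T : TwistedGroupAlgebra F A R) (C : AddSubgroup A)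
    (M : Type*) [AddCommGroup M] [Module R M] [Module F M] : Prop :=
  ∃ s : Finset M, Submodule.span F {x : M | ∃ c ∈ C, ∃ m ∈ s, x = T.of c • m} = ⊤

/-- `M` is torsion-free as an `F*C`-module: no nonzero element of `M` is annihilated by a
nonzero element of `F*C`. -/
def TorsionFreeOn (T : TwistedGroupAlgebra F A R) (C : AddSubgroup A)
    (M : Type*) [AddCommGroup M] [Module R M] : Prop :=
  ∀ β ∈ T.sub C, ∀ m : M, β • m = 0 → β = 0 ∨ m = 0

/-- `M` is `F*C`-torsion: every element of `M` is annihilated by some nonzero element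
of `F*C`. -/
def IsTorsionOn (T : TwistedGroupAlgebra F A R) (C : AddSubgroup A)
    (M : Type*) [AddCommGroup M] [Module R M] : Prop :=
  ∀ m : M, ∃ β ∈ T.sub C, β ≠ 0 ∧ β • m = 0

end TwistedGroupAlgebra

/-- The Gelfand–Kirillov dimension of a module `M` over an `F`-algebra `R`: the supremum over
finite-dimensional `F`-subspaces `V ≤ R` and `W ≤ M` of `limsup_n log dim_F (Vⁿ·W) / log n`. -/
noncomputable def gkDim (F : Type*) [Field F] (R : Type*) [Ring R] [Algebra F R]
    (M : Type*) [AddCommGroup M] [Module R M] [Module F M] [IsScalarTower F R M] : ℝ≥0∞ :=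
  ⨆ (V : Submodule F R) (_ : V.FG) (W : Submodule F M) (_ : W.FG),
    Filter.limsup
      (fun n : ℕ =>
        ENNReal.ofReal
          (Real.log (Module.finrank F
            ↥(Submodule.span F (Set.image2 (· • ·) ((V ^ n : Submodule F R) : Set R) (W : Set M))))
           / Real.log n))
      Filter.atTop

namespace TwistedGroupAlgebra

variable {F A R : Type*} [Field F] [AddCommGroup A] [Ring R] [Algebra F R]
variable (T : TwistedGroupAlgebra F A R)

lemma repr_of (a : A) : T.basis.repr (T.of a) = Finsupp.single a 1 := by
  rw [← T.basis_eq]; exact T.basis.repr_self a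

lemma of_ne_zero (a : A) : T.of a ≠ 0 := by
  rw [← T.basis_eq]; exact T.basis.ne_zero a

include T in
lemma one_ne_zero' : (1 : R) ≠ 0 := by
  have h := T.of_zero
  rw [← h]; exact T.of_ne_zero 0

lemma smul_of_cancel {a : A} {f g : F} (h : f • T.of a = g • T.of a) : f = g := by
  have h2 := congrArg (fun z => T.basis.repr z a) h
  simpa [map_smul, T.repr_of, Finsupp.single_apply] using h2

lemma cocycle_zero_right (a : A) : (T.cocycle a 0 : F) = 1 := by
  have h := T.of_mul a 0
  rw [T.of_zero, mul_one, add_zero] at h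
  have : (1 : F) • T.of a = (T.cocycle a 0 : F) • T.of a := by
    rw [one_smul]; exact h
  exact (T.smul_of_cancel this).symm

lemma cocycle_zero_left (a : A) : (T.cocycle 0 a : F) = 1 := by
  have h := T.of_mul 0 a
  rw [T.of_zero, one_mul, zero_add] at h
  have : (1 : F) • T.of a = (T.cocycle 0 a : F) • T.of a := by
    rw [one_smul]; exact h
  exact (T.smul_of_cancel this).symm

/-- `of a` is a unit. -/
noncomputable def ofUnit (a : A) : Rˣ where
  val := T.of a
  inv := ((T.cocycle a (-a) : F))⁻¹ • T.of (-a)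
  val_inv := by
    rw [mul_smul_comm, T.of_mul, smul_smul, add_neg_cancel, T.of_zero,
      inv_mul_cancel₀ (Units.ne_zero _), one_smul]
  inv_val := by
    have h1 : (((T.cocycle (-a) a : F))⁻¹ • T.of (-a)) * T.of a = 1 := by
      rw [smul_mul_assoc, T.of_mul, smul_smul, neg_add_cancel, T.of_zero,
        inv_mul_cancel₀ (Units.ne_zero _), one_smul]
    have h2 : T.of a * (((T.cocycle a (-a) : F))⁻¹ • T.of (-a)) = 1 := by
      rw [mul_smul_comm, T.of_mul, smul_smul, add_neg_cancel, T.of_zero,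
        inv_mul_cancel₀ (Units.ne_zero _), one_smul]
    have h3 := left_inv_eq_right_inv h1 h2
    rw [← h3]; exact h1

@[simp] lemma ofUnit_coe (a : A) : ((T.ofUnit a : Rˣ) : R) = T.of a := rfl

@[simp] lemma ofUnit_inv_coe (a : A) :
    (((T.ofUnit a)⁻¹ : Rˣ) : R) = ((T.cocycle a (-a) : F))⁻¹ • T.of (-a) := rfl

/-- The scalar by which conjugation by `of a` rescales `of b`. -/
noncomputable def mu (a b : A) : F :=
  (T.cocycle a b : F) * ((T.cocycle a (-a) : F))⁻¹ * (T.cocycle (a + b) (-a) : F)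

lemma mu_ne_zero (a b : A) : T.mu a b ≠ 0 := by
  unfold mu
  exact mul_ne_zero (mul_ne_zero (Units.ne_zero _) (inv_ne_zero (Units.ne_zero _)))
    (Units.ne_zero _)

lemma mu_zero (a : A) : T.mu a 0 = 1 := by
  unfold mu
  rw [T.cocycle_zero_right, add_zero, one_mul, inv_mul_cancel₀ (Units.ne_zero _)]

/-- Conjugation of a basis element. -/
lemma conj_of (a b : A) :
    (T.ofUnit a : R) * T.of b * (((T.ofUnit a)⁻¹ : Rˣ) : R) = T.mu a b • T.of b := by
  rw [T.ofUnit_coe, T.ofUnit_inv_coe, T.of_mul, smul_mul_assoc, mul_smul_comm,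
    T.of_mul, smul_smul, smul_smul]
  have hb : a + b + -a = b := by abel
  rw [hb]; rfl

lemma repr_mul_single (k : F) (d b : A) (z : R) :
    T.basis.repr (z * (k • T.of d)) b
      = (k * (T.cocycle (b - d) d : F)) * T.basis.repr z (b - d) := by
  have key : (Finsupp.lapply b).comp (T.basis.repr.toLinearMap.comp
        (LinearMap.mulRight F (k • T.of d)))
      = (k * (T.cocycle (b - d) d : F)) •
          ((Finsupp.lapply (b - d)).comp T.basis.repr.toLinearMap) := by
    classical
    apply T.basis.ext
    intro a
    simp only [LinearMap.comp_apply, LinearMap.smul_apply, Finsupp.lapply_apply,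
      LinearMap.mulRight_apply, LinearEquiv.coe_toLinearMap]
    rw [T.basis_eq, mul_smul_comm, T.of_mul, smul_smul, map_smul, T.repr_of]
    by_cases h : a + d = b
    · have hbd : b - d = a := by rw [← h]; abel
      simp [hbd, Finsupp.single_apply, h, smul_eq_mul, T.repr_of]
    · have hne : ¬ a = b - d := fun hc => h (by rw [hc]; abel)
      simp [Finsupp.single_apply, h, hne, T.repr_of]
  have := congrArg (fun (L : R →ₗ[F] F) => L z) key
  simpa [smul_eq_mul] using this

lemma repr_mul (x y : R) (s : A) :
    T.basis.repr (x * y) s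
      = ∑ b ∈ (T.basis.repr y).support,
          (T.basis.repr y b * (T.cocycle (s - b) b : F)) * T.basis.repr x (s - b) := by
  conv_lhs => rw [← T.basis.linearCombination_repr y, Finsupp.linearCombination_apply,
    Finsupp.sum, Finset.mul_sum]
  rw [map_sum, Finsupp.finset_sum_apply]
  apply Finset.sum_congr rfl
  intro b _
  rw [T.basis_eq, T.repr_mul_single]

lemma repr_conj (a : A) (z : R) (b : A) :
    T.basis.repr ((T.ofUnit a : R) * z * (((T.ofUnit a)⁻¹ : Rˣ) : R)) b
      = T.mu a b * T.basis.repr z b := by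
  have key : (Finsupp.lapply b).comp (T.basis.repr.toLinearMap.comp
        ((LinearMap.mulRight F (((T.ofUnit a)⁻¹ : Rˣ) : R)).comp
          (LinearMap.mulLeft F ((T.ofUnit a : Rˣ) : R))))
      = T.mu a b • ((Finsupp.lapply b).comp T.basis.repr.toLinearMap) := by
    apply T.basis.ext
    intro a'
    simp only [LinearMap.comp_apply, LinearMap.smul_apply, Finsupp.lapply_apply,
      LinearMap.mulRight_apply, LinearMap.mulLeft_apply, LinearEquiv.coe_toLinearMap]
    classical
    rw [T.basis_eq, T.conj_of, map_smul, T.repr_of]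
    by_cases h : a' = b
    · subst h; simp [Finsupp.single_apply]
    · simp [Finsupp.single_apply, h]
  have := congrArg (fun (L : R →ₗ[F] F) => L z) key
  simpa [smul_eq_mul, mul_assoc] using this

include T in
lemma mul_ne_zero_of_hom {B : Type*} [AddCommGroup B] [LinearOrder B] [IsOrderedAddMonoid B] (e : A →+ B)
    (he : Function.Injective e) {x y : R} (hx : x ≠ 0) (hy : y ≠ 0) : x * y ≠ 0 := by
  classical
  have hfx : T.basis.repr x ≠ 0 := by
    intro h; exact hx (by simpa using (LinearEquiv.map_eq_zero_iff T.basis.repr).mp h)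
  have hfy : T.basis.repr y ≠ 0 := by
    intro h; exact hy (by simpa using (LinearEquiv.map_eq_zero_iff T.basis.repr).mp h)
  obtain ⟨a₀, ha₀, hamax⟩ := Finset.exists_max_image (T.basis.repr x).support (fun a => e a)
    (Finsupp.support_nonempty_iff.mpr hfx)
  obtain ⟨b₀, hb₀, hbmax⟩ := Finset.exists_max_image (T.basis.repr y).support (fun a => e a)
    (Finsupp.support_nonempty_iff.mpr hfy)
  intro h0
  have hrm := T.repr_mul x y (a₀ + b₀)
  rw [h0, map_zero, Finsupp.coe_zero, Pi.zero_apply] at hrm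
  rw [Finset.sum_eq_single_of_mem b₀ hb₀] at hrm
  · have ha : a₀ + b₀ - b₀ = a₀ := by abel
    rw [ha] at hrm
    have : T.basis.repr y b₀ * (T.cocycle (a₀ + b₀ - b₀) b₀ : F) * T.basis.repr x a₀ ≠ 0 := by
      rw [ha]
      exact mul_ne_zero (mul_ne_zero (Finsupp.mem_support_iff.mp hb₀) (Units.ne_zero _))
        (Finsupp.mem_support_iff.mp ha₀)
    rw [ha] at this
    exact this hrm.symm
  · intro b hb hbne
    have hfz : T.basis.repr x (a₀ + b₀ - b) = 0 := by
      by_contra hmem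
      have hmem' : a₀ + b₀ - b ∈ (T.basis.repr x).support := Finsupp.mem_support_iff.mpr hmem
      have h1 : e (a₀ + b₀ - b) ≤ e a₀ := hamax _ hmem'
      have h2 : e b < e b₀ := lt_of_le_of_ne (hbmax _ hb) (fun hc => hbne (he hc))
      have h3 : e (a₀ + b₀ - b) + e b = e a₀ + e b₀ := by
        rw [← map_add, ← map_add]
        congr 1; abel
      have h4 : e (a₀ + b₀ - b) + e b < e a₀ + e b₀ := add_lt_add_of_le_of_lt h1 h2
      rw [h3] at h4; exact lt_irrefl _ h4
    rw [hfz, mul_zero]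

include T in
lemma mul_ne_zero'' [Module.Free ℤ A] [Module.Finite ℤ A] {x y : R}
    (hx : x ≠ 0) (hy : y ≠ 0) : x * y ≠ 0 := by
  classical
  let ι := Module.Free.ChooseBasisIndex ℤ A
  let bA := Module.Free.chooseBasis ℤ A
  let n := Fintype.card ι
  let eqv : ι ≃ Fin n := Fintype.equivFin ι
  let e : A →+ Lex (Fin n →₀ ℤ) :=
    { toFun := fun a => toLex (Finsupp.mapDomain eqv (bA.repr a))
      map_zero' := by simp
      map_add' := fun a b => by
        simp only [map_add, Finsupp.mapDomain_add]; rfl }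
  have he : Function.Injective e := by
    intro a b hab
    have h1 : Finsupp.mapDomain eqv (bA.repr a) = Finsupp.mapDomain eqv (bA.repr b) :=
      congrArg ofLex hab
    have h2 := Finsupp.mapDomain_injective eqv.injective h1
    exact bA.repr.injective h2
  exact T.mul_ne_zero_of_hom e he hx hy

lemma one_mem_sub (C : AddSubgroup A) : (1 : R) ∈ T.sub C := by
  have h := T.of_zero
  rw [← h]
  exact Submodule.subset_span ⟨0, C.zero_mem, rfl⟩

lemma of_mem_sub {C : AddSubgroup A} {c : A} (hc : c ∈ C) : T.of c ∈ T.sub C :=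
  Submodule.subset_span ⟨c, hc, rfl⟩

lemma mul_mem_sub {C : AddSubgroup A} {x y : R} (hx : x ∈ T.sub C) (hy : y ∈ T.sub C) :
    x * y ∈ T.sub C := by
  have key : T.sub C * T.sub C ≤ T.sub C := by
    rw [sub, Submodule.span_mul_span]
    apply Submodule.span_le.mpr
    rintro z ⟨u, ⟨c₁, hc₁, rfl⟩, v, ⟨c₂, hc₂, rfl⟩, rfl⟩
    show T.of c₁ * T.of c₂ ∈ Submodule.span F (T.of '' (C : Set A))
    rw [T.of_mul]
    exact Submodule.smul_mem _ _ (Submodule.subset_span ⟨c₁ + c₂, C.add_mem hc₁ hc₂, rfl⟩)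
  exact key (Submodule.mul_mem_mul hx hy)

lemma pow_mem_sub {C : AddSubgroup A} {x : R} (hx : x ∈ T.sub C) (i : ℕ) :
    x ^ i ∈ T.sub C := by
  induction i with
  | zero => simpa using T.one_mem_sub C
  | succ i ih => rw [pow_succ]; exact T.mul_mem_sub ih hx

/-- Conjugation by `of a` preserves `F*C`. -/
lemma conj_mem_sub {C : AddSubgroup A} {x : R} (hx : x ∈ T.sub C) (a : A) :
    (T.ofUnit a : R) * x * (((T.ofUnit a)⁻¹ : Rˣ) : R) ∈ T.sub C := by
  induction hx using Submodule.span_induction with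
  | mem z hz =>
      obtain ⟨c, hc, rfl⟩ := hz
      rw [T.conj_of]
      exact Submodule.smul_mem _ _ (T.of_mem_sub hc)
  | zero => simpa using Submodule.zero_mem _
  | add u v _ _ hu hv =>
      have : (T.ofUnit a : R) * (u + v) * (((T.ofUnit a)⁻¹ : Rˣ) : R)
          = (T.ofUnit a : R) * u * (((T.ofUnit a)⁻¹ : Rˣ) : R)
            + (T.ofUnit a : R) * v * (((T.ofUnit a)⁻¹ : Rˣ) : R) := by
        rw [mul_add, add_mul]
      rw [this]; exact Submodule.add_mem _ hu hv
  | smul f u _ hu =>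
      have : (T.ofUnit a : R) * (f • u) * (((T.ofUnit a)⁻¹ : Rˣ) : R)
          = f • ((T.ofUnit a : R) * u * (((T.ofUnit a)⁻¹ : Rˣ) : R)) := by
        rw [mul_smul_comm, smul_mul_assoc]
      rw [this]; exact Submodule.smul_mem _ _ hu

/-- `F*C₀` is commutative when the basis elements from `C₀` pairwise commute. -/
lemma comm_of_mem_sub {C₀ : AddSubgroup A} (hcomm : T.IsCommutativeOn C₀) {x y : R}
    (hx : x ∈ T.sub C₀) (hy : y ∈ T.sub C₀) : x * y = y * x := by
  induction hx using Submodule.span_induction with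
  | mem z hz =>
      obtain ⟨c, hc, rfl⟩ := hz
      induction hy using Submodule.span_induction with
      | mem w hw =>
          obtain ⟨c', hc', rfl⟩ := hw
          exact hcomm c hc c' hc'
      | zero => simp
      | add u v _ _ hu hv => rw [mul_add, add_mul, hu, hv]
      | smul f u _ hu => rw [mul_smul_comm, smul_mul_assoc, hu]
  | zero => simp
  | add u v _ _ hu hv => rw [mul_add, add_mul, hu, hv]
  | smul f u _ hu => rw [mul_smul_comm, smul_mul_assoc, hu]

lemma span_range_of : Submodule.span F (Set.range T.of) = ⊤ := by
  have h : Set.range T.of = Set.range (⇑T.basis) := by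
    ext z; constructor
    · rintro ⟨a, rfl⟩; exact ⟨a, T.basis_eq a⟩
    · rintro ⟨a, rfl⟩; exact ⟨a, (T.basis_eq a).symm⟩
  rw [h]; exact T.basis.span_eq

include T in
/-- A two-sided "ideal-like" subset of `R` containing a nonzero element contains `1`. -/
lemma one_mem_of_twoSided (hcenter : Subalgebra.center F R = ⊥) (P : Set R)
    (hadd : ∀ x ∈ P, ∀ y ∈ P, x + y ∈ P)
    (hleft : ∀ r : R, ∀ x ∈ P, r * x ∈ P)
    (hright : ∀ r : R, ∀ x ∈ P, x * r ∈ P)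
    (x₀ : R) (hx₀ : x₀ ∈ P) (hx0 : x₀ ≠ 0) : (1 : R) ∈ P := by
  classical
  suffices H : ∀ n : ℕ, ∀ z, z ∈ P → z ≠ 0 → (T.basis.repr z).support.card ≤ n → (1 : R) ∈ P by
    exact H (T.basis.repr x₀).support.card x₀ hx₀ hx0 le_rfl
  intro n
  induction n with
  | zero =>
      intro z hzP hz0 hcard
      exfalso
      have h1 : (T.basis.repr z).support = ∅ := Finset.card_eq_zero.mp (Nat.le_zero.mp hcard)
      have h2 : T.basis.repr z = 0 := Finsupp.support_eq_empty.mp h1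
      exact hz0 ((LinearEquiv.map_eq_zero_iff T.basis.repr).mp h2)
  | succ n IH =>
      intro z hzP hz0 hcard
      -- pick an element of the support and normalize so that 0 is in the support
      have hfz : T.basis.repr z ≠ 0 := fun h =>
        hz0 ((LinearEquiv.map_eq_zero_iff T.basis.repr).mp h)
      obtain ⟨a₁, ha₁⟩ := Finsupp.support_nonempty_iff.mpr hfz
      set k : F := ((T.cocycle a₁ (-a₁) : F))⁻¹ with hk
      set z' : R := z * (((T.ofUnit a₁)⁻¹ : Rˣ) : R) with hz'
      have hz'P : z' ∈ P := hright _ _ hzP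
      have hz'repr : ∀ b : A, T.basis.repr z' b
          = (k * (T.cocycle (b - -a₁) (-a₁) : F)) * T.basis.repr z (b - -a₁) := by
        intro b
        rw [hz', T.ofUnit_inv_coe, T.repr_mul_single]
      have h0 : T.basis.repr z' 0 ≠ 0 := by
        rw [hz'repr 0]
        have h1 : (0 : A) - -a₁ = a₁ := by abel
        rw [h1]
        exact mul_ne_zero (mul_ne_zero (inv_ne_zero (Units.ne_zero _)) (Units.ne_zero _))
          (Finsupp.mem_support_iff.mp ha₁)
      have h0mem : (0 : A) ∈ (T.basis.repr z').support := Finsupp.mem_support_iff.mpr h0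
      have hz'0 : z' ≠ 0 := by
        intro h; rw [h] at h0; simp at h0
      have hsupp : (T.basis.repr z').support ⊆ (T.basis.repr z).support.image (fun a => a + -a₁) := by
        intro b hb
        have hbv : T.basis.repr z' b ≠ 0 := Finsupp.mem_support_iff.mp hb
        have h1 : T.basis.repr z (b - -a₁) ≠ 0 := by
          intro h
          rw [hz'repr b, h, mul_zero] at hbv
          exact hbv rfl
        refine Finset.mem_image.mpr ⟨b - -a₁, Finsupp.mem_support_iff.mpr h1, ?_⟩
        abel
      have hcard' : (T.basis.repr z').support.card ≤ n + 1 :=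
        le_trans (Finset.card_le_card hsupp) (le_trans Finset.card_image_le hcard)
      by_cases hall : ∀ a : A, (T.ofUnit a : R) * z' * (((T.ofUnit a)⁻¹ : Rˣ) : R) = z'
      · -- z' is central up to the support being {0}
        have hsupp0 : (T.basis.repr z').support ⊆ {0} := by
          intro b hb
          have hbne : T.basis.repr z' b ≠ 0 := Finsupp.mem_support_iff.mp hb
          have hmu : ∀ a : A, T.mu a b = 1 := by
            intro a
            have h1 := congrArg (fun w => T.basis.repr w b) (hall a)
            rw [T.repr_conj] at h1
            have h2 : T.mu a b * T.basis.repr z' b = 1 * T.basis.repr z' b := by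
              rw [one_mul]; exact h1
            exact mul_right_cancel₀ hbne h2
          -- of b commutes with every of a, hence is central
          have hcommb : ∀ a : A, T.of a * T.of b = T.of b * T.of a := by
            intro a
            have h1 := T.conj_of a b
            rw [hmu a, one_smul] at h1
            have h2 : T.of b * (T.ofUnit a : R) = (T.ofUnit a : R) * T.of b := by
              conv_lhs => rw [← h1]
              rw [Units.inv_mul_cancel_right]
            simpa using h2.symm
          have hcentral : T.of b ∈ Subalgebra.center F R := by
            rw [Subalgebra.mem_center_iff]
            intro g
            have hg : g ∈ Submodule.span F (Set.range T.of) := by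
              rw [T.span_range_of]; exact Submodule.mem_top
            induction hg using Submodule.span_induction with
            | mem w hw => obtain ⟨a, rfl⟩ := hw; exact hcommb a
            | zero => simp
            | add u v _ _ hu hv => rw [add_mul, mul_add, hu, hv]
            | smul f u _ hu => rw [smul_mul_assoc, mul_smul_comm, hu]
          rw [hcenter, Algebra.mem_bot] at hcentral
          obtain ⟨fl, hfl⟩ := hcentral
          have h3 : T.of b = fl • T.of 0 := by
            rw [T.of_zero, ← Algebra.algebraMap_eq_smul_one, hfl]
          have h4 := congrArg (fun w => T.basis.repr w b) h3
          simp only [map_smul, T.repr_of] at h4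
          by_contra hb0
          have hb0' : b ≠ 0 := by simpa using hb0
          rw [Finsupp.single_eq_same] at h4
          rw [Finsupp.smul_single] at h4
          rw [Finsupp.single_apply, if_neg (fun h => hb0' h.symm)] at h4
          exact one_ne_zero h4
        -- hence z' is a nonzero scalar
        have hrepr : T.basis.repr z' = Finsupp.single 0 (T.basis.repr z' 0) :=
          Finsupp.support_subset_singleton.mp hsupp0
        have hz'eq : z' = (T.basis.repr z' 0) • (1 : R) := by
          apply T.basis.repr.injective
          rw [map_smul]
          conv_lhs => rw [hrepr]
          have h5 : (1 : R) = T.of 0 := T.of_zero.symm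
          rw [h5, T.repr_of, Finsupp.smul_single, smul_eq_mul, mul_one]
        obtain ⟨c0, hc0ne, hz'c⟩ : ∃ c0 : F, c0 ≠ 0 ∧ z' = c0 • 1 := ⟨_, h0, hz'eq⟩
        have hinv : algebraMap F R c0⁻¹ * z' = 1 := by
          rw [hz'c, ← Algebra.smul_def, smul_smul, inv_mul_cancel₀ hc0ne, one_smul]
        rw [← hinv]
        exact hleft _ _ hz'P
      · push_neg at hall
        obtain ⟨a, ha⟩ := hall
        set w : R := (T.ofUnit a : R) * z' * (((T.ofUnit a)⁻¹ : Rˣ) : R) with hw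
        set v : R := w - z' with hv
        have hvP : v ∈ P := by
          have h1 : (T.ofUnit a : R) * z' ∈ P := hleft _ _ hz'P
          have h2 : w ∈ P := hright _ _ h1
          have h3 : (-1 : R) * z' ∈ P := hleft _ _ hz'P
          have h4 : v = w + (-1 : R) * z' := by rw [hv, neg_one_mul, sub_eq_add_neg]
          rw [h4]; exact hadd _ h2 _ h3
        have hv0 : v ≠ 0 := sub_ne_zero.mpr ha
        have hvrepr : ∀ b : A, T.basis.repr v b = (T.mu a b - 1) * T.basis.repr z' b := by
          intro b
          rw [hv, map_sub, Finsupp.sub_apply, hw, T.repr_conj, sub_mul, one_mul]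
        have hvsupp : (T.basis.repr v).support ⊆ (T.basis.repr z').support.erase 0 := by
          intro b hb
          have hbne : T.basis.repr v b ≠ 0 := Finsupp.mem_support_iff.mp hb
          rw [hvrepr b] at hbne
          refine Finset.mem_erase.mpr ⟨?_, Finsupp.mem_support_iff.mpr (fun h => hbne (by rw [h, mul_zero]))⟩
          intro hb0
          rw [hb0, T.mu_zero, sub_self, zero_mul] at hbne
          exact hbne rfl
        have hvcard : (T.basis.repr v).support.card ≤ n := by
          calc (T.basis.repr v).support.card ≤ ((T.basis.repr z').support.erase 0).card :=
                Finset.card_le_card hvsupp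
            _ = (T.basis.repr z').support.card - 1 := Finset.card_erase_of_mem h0mem
            _ ≤ (n + 1) - 1 := Nat.sub_le_sub_right hcard' 1
            _ = n := rfl
        exact IH v hvP hv0 hvcard

/-- `F*C` as a subalgebra of `R`. -/
def subalg (C : AddSubgroup A) : Subalgebra F R :=
  (T.sub C).toSubalgebra (T.one_mem_sub C) (fun _ _ hx hy => T.mul_mem_sub hx hy)

lemma mem_subalg {C : AddSubgroup A} {x : R} : x ∈ T.subalg C ↔ x ∈ T.sub C := Iff.rfl

lemma of_eq_smul_of_rep {C₀ : AddSubgroup A} {c r : A} (hc0 : c - r ∈ C₀) :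
    ∃ dcoef : R, dcoef ∈ T.sub C₀ ∧ T.of c = dcoef * T.of r := by
  refine ⟨((T.cocycle (c - r) r : F))⁻¹ • T.of (c - r),
    Submodule.smul_mem _ _ (T.of_mem_sub hc0), ?_⟩
  rw [smul_mul_assoc, T.of_mul, smul_smul, inv_mul_cancel₀ (Units.ne_zero _), one_smul,
    sub_add_cancel]

include T in
lemma exists_ann_of_rel {M : Type*} [AddCommGroup M] [Module R M]
    (hdom : ∀ x y : R, x ≠ 0 → y ≠ 0 → x * y ≠ 0)
    {C₀ : AddSubgroup A} {β : R} (hβ : β ≠ 0) {m : M} (hm : β • m = 0) :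
    ∀ (n : ℕ) (g : ℕ → R), (∀ i, g i ∈ T.sub C₀) →
      β ^ (n + 1) = ∑ i ∈ Finset.range (n + 1), g i * β ^ i →
      ∃ d ∈ T.sub C₀, d ≠ 0 ∧ d • m = 0 := by
  intro n
  induction n with
  | zero =>
      intro g hg hrel
      rw [Finset.sum_range_one, pow_zero, mul_one, pow_one] at hrel
      exact ⟨g 0, hg 0, fun h => hβ (by rw [hrel, h]), by rw [← hrel]; exact hm⟩
  | succ n IH =>
      intro g hg hrel
      have hpow : ∀ i : ℕ, β ^ (i + 1) • m = 0 := by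
        intro i; rw [pow_succ, mul_smul, hm, smul_zero]
      have h0m : g 0 • m = 0 := by
        have h1 := congrArg (fun w : R => w • m) hrel
        rw [hpow (n + 1), Finset.sum_smul] at h1
        rw [Finset.sum_range_succ' (fun i => (g i * β ^ i) • m) (n + 1)] at h1
        have h2 : ∀ i ∈ Finset.range (n + 1), (g (i + 1) * β ^ (i + 1)) • m = 0 := by
          intro i _
          rw [mul_smul, hpow i, smul_zero]
        rw [Finset.sum_congr rfl h2, Finset.sum_const_zero, zero_add, pow_zero, mul_one] at h1
        exact h1.symm
      by_cases hg0 : g 0 = 0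
      · have hrel2 : (β ^ (n + 1) - ∑ i ∈ Finset.range (n + 1), g (i + 1) * β ^ i) * β = 0 := by
          rw [sub_mul, Finset.sum_mul, sub_eq_zero, ← pow_succ]
          rw [hrel, Finset.sum_range_succ' (fun i => g i * β ^ i) (n + 1)]
          rw [hg0, zero_mul, add_zero]
          apply Finset.sum_congr rfl
          intro i _
          rw [pow_succ, mul_assoc]
        have hleftz : β ^ (n + 1) - ∑ i ∈ Finset.range (n + 1), g (i + 1) * β ^ i = 0 := by
          by_contra hne
          exact hdom _ _ hne hβ hrel2
        have hrel3 : β ^ (n + 1) = ∑ i ∈ Finset.range (n + 1), g (i + 1) * β ^ i :=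
          sub_eq_zero.mp hleftz
        exact IH (fun i => g (i + 1)) (fun i => hg (i + 1)) hrel3
      · exact ⟨g 0, hg 0, hg0, h0m⟩

include T in
lemma exists_finite_adjoin [Module.Free ℤ A] [Module.Finite ℤ A] (C₀ : AddSubgroup A) :
    ∃ t : Set R, t.Finite ∧ Algebra.adjoin F t = T.subalg C₀ := by
  classical
  haveI : IsNoetherian ℤ A := isNoetherian_of_isNoetherianRing_of_finite ℤ A
  have hC₀fg : (AddSubgroup.toIntSubmodule C₀).FG := IsNoetherian.noetherian _
  obtain ⟨s, hs⟩ := hC₀fg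
  have hcl : AddSubgroup.closure (s : Set A) = C₀ := by
    have h1 := congrArg Submodule.toAddSubgroup hs
    rw [Submodule.span_int_eq_addSubgroupClosure] at h1
    ext a
    rw [h1]
    rfl
  refine ⟨T.of '' ((s : Set A) ∪ -(s : Set A)),
    (s.finite_toSet.union s.finite_toSet.neg).image _, ?_⟩
  apply le_antisymm
  · apply Algebra.adjoin_le
    rintro z ⟨c, hc, rfl⟩
    have hcC₀ : c ∈ C₀ := by
      rcases hc with hc | hc
      · rw [← hcl]; exact AddSubgroup.subset_closure hc
      · rw [Set.mem_neg] at hc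
        have h2 : -c ∈ C₀ := by rw [← hcl]; exact AddSubgroup.subset_closure hc
        simpa using C₀.neg_mem h2
    exact T.of_mem_sub hcC₀
  · intro x hx
    rw [mem_subalg] at hx
    induction hx using Submodule.span_induction with
    | mem z hz =>
        obtain ⟨c, hc, rfl⟩ := hz
        have key : ∀ c ∈ C₀, T.of c ∈ Algebra.adjoin F (T.of '' ((s : Set A) ∪ -(s : Set A)))
            ∧ T.of (-c) ∈ Algebra.adjoin F (T.of '' ((s : Set A) ∪ -(s : Set A))) := by
          intro c hcmem
          rw [← hcl] at hcmem
          induction hcmem using AddSubgroup.closure_induction with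
          | mem w hw =>
              constructor
              · exact Algebra.subset_adjoin ⟨w, Or.inl hw, rfl⟩
              · exact Algebra.subset_adjoin ⟨-w, Or.inr (by simpa using hw), rfl⟩
          | zero =>
              constructor
              · have h := T.of_zero; rw [h]; exact Subalgebra.one_mem _
              · have h := T.of_zero; rw [neg_zero, h]; exact Subalgebra.one_mem _
          | add u v hu hv hu' hv' =>
              constructor
              · have h1 : T.of (u + v)
                    = ((T.cocycle u v : F))⁻¹ • (T.of u * T.of v) := by
                  rw [T.of_mul, smul_smul, inv_mul_cancel₀ (Units.ne_zero _), one_smul]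
                rw [h1]
                exact Subalgebra.smul_mem _ (Subalgebra.mul_mem _ hu'.1 hv'.1) _
              · have h1 : T.of (-(u + v))
                    = ((T.cocycle (-u) (-v) : F))⁻¹ • (T.of (-u) * T.of (-v)) := by
                  rw [T.of_mul, smul_smul, inv_mul_cancel₀ (Units.ne_zero _), one_smul,
                    neg_add]
                rw [h1]
                exact Subalgebra.smul_mem _ (Subalgebra.mul_mem _ hu'.2 hv'.2) _
          | neg u hu hu' =>
              exact ⟨hu'.2, by simpa using hu'.1⟩
        exact (key c hc).1
    | zero => exact Subalgebra.zero_mem _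
    | add u v _ _ hu hv => exact Subalgebra.add_mem _ hu hv
    | smul f u _ hu => exact Subalgebra.smul_mem _ hu _

include T in
lemma finiteType_subalg [Module.Free ℤ A] [Module.Finite ℤ A] (C₀ : AddSubgroup A) :
    Algebra.FiniteType F ↥(T.subalg C₀) := by
  classical
  obtain ⟨t, htfin, hadj⟩ := T.exists_finite_adjoin C₀
  haveI hft : Algebra.FiniteType F ↥(Algebra.adjoin F t) := by
    refine ⟨⟨(htfin.preimage (Subtype.val_injective.injOn)).toFinset, ?_⟩⟩
    have h := Algebra.adjoin_adjoin_coe_preimage (R := F) (s := t)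
    simpa using h
  rw [hadj] at hft
  exact hft

end TwistedGroupAlgebra

/-- **Theorem A(ii).** Let `F*A` be a twisted group algebra of a finitely generated free abelian
group `A` over a field `F` whose center is exactly `F`.  Let `C ≤ A` contain a subgroup `C₀` of
finite index with `F*C₀` commutative.  If `M` is a nonzero finitely generated `F*A`-module which
is finitely generated as an `F*C`-module, then `M` is torsion-free as an `F*C`-module. -/
theorem torsionFree_of_fg_over_commutative_sub
    {F A R M : Type*} [Field F]
    [AddCommGroup A] [Module.Free ℤ A] [Module.Finite ℤ A]
    [Ring R] [Algebra F R] (T : TwistedGroupAlgebra F A R)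
    [AddCommGroup M] [Module R M] [Module F M] [IsScalarTower F R M]
    (hcenter : Subalgebra.center F R = ⊥)
    (C C₀ : AddSubgroup A) (hle : C₀ ≤ C) (hfin : (C₀.addSubgroupOf C).FiniteIndex)
    (hcomm : T.IsCommutativeOn C₀)
    [Nontrivial M] [Module.Finite R M]
    (hfg : T.FGOn C M) :
    T.TorsionFreeOn C M := by
  classical
  have hdom : ∀ x y : R, x ≠ 0 → y ≠ 0 → x * y ≠ 0 := fun x y hx hy => T.mul_ne_zero'' hx hy
  intro β hβmem m hβm
  by_cases hβ : β = 0
  · exact Or.inl hβ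
  refine Or.inr ?_
  -- the commutative subalgebra D = F*C₀
  set D : Subalgebra F R := T.subalg C₀ with hD
  letI : CommRing ↥D :=
    { (inferInstance : Ring ↥D) with
      mul_comm := fun x y => Subtype.ext (T.comm_of_mem_sub hcomm x.2 y.2) }
  haveI hDft : Algebra.FiniteType F ↥D := T.finiteType_subalg C₀
  haveI hDnoeth : IsNoetherianRing ↥D := Algebra.FiniteType.isNoetherianRing F ↥D
  -- scalar towers
  have hsmulDR : ∀ (d : ↥D) (x : R), d • x = (d : R) * x := fun d x => rfl
  have hsmulDM : ∀ (d : ↥D) (x : M), d • x = (d : R) • x := fun d x => rfl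
  haveI : IsScalarTower ↥D R M :=
    ⟨fun d r x => by rw [hsmulDM, hsmulDR, mul_smul]⟩
  -- coset representatives
  haveI : Finite (↥C ⧸ C₀.addSubgroupOf C) :=
    AddSubgroup.finite_quotient_of_finiteIndex
  letI : Fintype (↥C ⧸ C₀.addSubgroupOf C) := Fintype.ofFinite _
  let rep : (↥C ⧸ C₀.addSubgroupOf C) → A := fun q => ((Quotient.out q : ↥C) : A)
  have hrepC : ∀ q, rep q ∈ C := fun q => (Quotient.out q : ↥C).2
  have hdecomp : ∀ c : ↥C, ((c : A) - rep (QuotientAddGroup.mk c)) ∈ C₀ := by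
    intro c
    have h1 : (QuotientAddGroup.mk (Quotient.out (QuotientAddGroup.mk c
        : ↥C ⧸ C₀.addSubgroupOf C)) : ↥C ⧸ C₀.addSubgroupOf C) = QuotientAddGroup.mk c :=
      Quotient.out_eq _
    have h2 := (QuotientAddGroup.eq).mp h1
    rw [AddSubgroup.mem_addSubgroupOf] at h2
    have h3 : ((-Quotient.out (QuotientAddGroup.mk c : ↥C ⧸ C₀.addSubgroupOf C) + c : ↥C) : A)
        = (c : A) - rep (QuotientAddGroup.mk c) := by
      push_cast
      abel
    rw [h3] at h2
    exact h2
  -- the decomposition of elements of F*C over D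
  have hofdec : ∀ c ∈ C, ∃ (d : ↥D) (q : ↥C ⧸ C₀.addSubgroupOf C),
      T.of c = (d : R) * T.of (rep q) := by
    intro c hc
    obtain ⟨dcoef, hdmem, heq⟩ := T.of_eq_smul_of_rep (hdecomp ⟨c, hc⟩)
    exact ⟨⟨dcoef, hdmem⟩, QuotientAddGroup.mk ⟨c, hc⟩, heq⟩
  -- the D-submodule of R spanned by the coset representatives contains F*C
  set W : Submodule ↥D R :=
    Submodule.span ↥D (Set.range (fun q : ↥C ⧸ C₀.addSubgroupOf C => T.of (rep q))) with hW
  have hsubW : ∀ x ∈ T.sub C, x ∈ W := by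
    intro x hx
    induction hx using Submodule.span_induction with
    | mem z hz =>
        obtain ⟨c, hc, rfl⟩ := hz
        obtain ⟨d, q, heq⟩ := hofdec c hc
        rw [heq, ← hsmulDR]
        exact Submodule.smul_mem _ _ (Submodule.subset_span ⟨q, rfl⟩)
    | zero => exact Submodule.zero_mem _
    | add u v _ _ hu hv => exact Submodule.add_mem _ hu hv
    | smul f u _ hu =>
        have h1 : f • u = (⟨algebraMap F R f, D.algebraMap_mem f⟩ : ↥D) • u := by
          rw [hsmulDR, ← Algebra.smul_def]
        rw [h1]
        exact Submodule.smul_mem _ _ hu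
  have hβW : ∀ i : ℕ, β ^ i ∈ W := fun i => hsubW _ (T.pow_mem_sub hβmem i)
  -- Noetherian induction: a monic relation for β over D
  have hWfg : W.FG := by
    refine ⟨Finset.image (fun q => T.of (rep q)) Finset.univ, ?_⟩
    rw [Finset.coe_image, Finset.coe_univ, Set.image_univ]
  haveI hWnoeth : IsNoetherian ↥D ↥W := isNoetherian_of_fg_of_noetherian W hWfg
  set f : ℕ →o Submodule ↥D R :=
    ⟨fun k => Submodule.span ↥D ((fun i => β ^ i) '' Set.Iic k), by
      intro j k hjk
      exact Submodule.span_mono (Set.image_mono (Set.Iic_subset_Iic.mpr hjk))⟩ with hf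
  set g : ℕ →o Submodule ↥D ↥W :=
    ⟨fun k => (f k).comap W.subtype, fun j k hjk => Submodule.comap_mono (f.monotone hjk)⟩
      with hg
  obtain ⟨nst, hnst⟩ := monotone_stabilizes_iff_noetherian.mpr hWnoeth g
  have hmem1 : β ^ (nst + 1) ∈ f (nst + 1) :=
    Submodule.subset_span ⟨nst + 1, Set.mem_Iic.mpr le_rfl, rfl⟩
  have hmem2 : β ^ (nst + 1) ∈ f nst := by
    have h1 : (⟨β ^ (nst + 1), hβW _⟩ : ↥W) ∈ g (nst + 1) := by
      rw [hg]
      exact Submodule.mem_comap.mpr hmem1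
    rw [← hnst (nst + 1) (Nat.le_succ nst)] at h1
    exact Submodule.mem_comap.mp h1
  rw [hf] at hmem2
  change β ^ (nst + 1) ∈ Submodule.span ↥D ((fun i => β ^ i) '' Set.Iic nst) at hmem2
  rw [Finsupp.mem_span_image_iff_linearCombination] at hmem2
  obtain ⟨l, hlsupp, hlsum⟩ := hmem2
  have hsubrange : l.support ⊆ Finset.range (nst + 1) := by
    intro i hi
    have h1 := (Finsupp.mem_supported _ l).mp hlsupp hi
    exact Finset.mem_range.mpr (Nat.lt_succ_of_le (Set.mem_Iic.mp h1))
  have hrel : β ^ (nst + 1) = ∑ i ∈ Finset.range (nst + 1), ((l i : R)) * β ^ i := by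
    rw [← hlsum, Finsupp.linearCombination_apply, Finsupp.sum]
    rw [Finset.sum_subset hsubrange]
    · exact Finset.sum_congr rfl (fun i _ => hsmulDR (l i) (β ^ i))
    · intro i _ hnmem
      rw [Finsupp.notMem_support_iff.mp hnmem, zero_smul]
  obtain ⟨d₀, hd₀mem, hd₀ne, hd₀m⟩ :=
    T.exists_ann_of_rel hdom hβ hβm nst (fun i => (l i : R)) (fun i => (l i).2) hrel
  -- the torsion predicate
  set Tor : M → Prop := fun x => ∃ d : R, d ∈ T.sub C₀ ∧ d ≠ 0 ∧ d • x = 0 with hTor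
  have hTor0 : Tor 0 := ⟨1, T.one_mem_sub C₀, T.one_ne_zero', smul_zero 1⟩
  have hTorm : Tor m := ⟨d₀, hd₀mem, hd₀ne, hd₀m⟩
  have hToradd : ∀ x y, Tor x → Tor y → Tor (x + y) := by
    rintro x y ⟨d1, hd1mem, hd1ne, hd1⟩ ⟨d2, hd2mem, hd2ne, hd2⟩
    refine ⟨d1 * d2, T.mul_mem_sub hd1mem hd2mem, hdom _ _ hd1ne hd2ne, ?_⟩
    rw [smul_add]
    have h1 : (d1 * d2) • x = 0 := by
      rw [T.comm_of_mem_sub hcomm hd1mem hd2mem, mul_smul, hd1, smul_zero]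
    have h2 : (d1 * d2) • y = 0 := by
      rw [mul_smul, hd2, smul_zero]
    rw [h1, h2, add_zero]
  have hTorsmulF : ∀ (fc : F) (x : M), Tor x → Tor (fc • x) := by
    rintro fc x ⟨d, hdmem, hdne, hd⟩
    refine ⟨d, hdmem, hdne, ?_⟩
    rw [← algebraMap_smul R fc x, ← mul_smul, ← Algebra.commutes fc d, mul_smul,
      hd, smul_zero]
  have hTorofa : ∀ (a : A) (x : M), Tor x → Tor (T.of a • x) := by
    rintro a x ⟨d, hdmem, hdne, hd⟩
    set u := T.ofUnit a with hu
    refine ⟨(u : R) * d * ((u⁻¹ : Rˣ) : R), T.conj_mem_sub hdmem a, ?_, ?_⟩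
    · intro h
      have hdrec : ((u⁻¹ : Rˣ) : R) * ((u : R) * d * ((u⁻¹ : Rˣ) : R)) * (u : R) = d := by
        rw [mul_assoc (u : R) d, Units.inv_mul_cancel_left, Units.inv_mul_cancel_right]
      rw [h, mul_zero, zero_mul] at hdrec
      exact hdne hdrec.symm
    · have h1 : T.of a = (u : R) := rfl
      rw [h1, ← mul_smul, mul_assoc, mul_assoc, Units.inv_mul, mul_one, mul_smul, hd,
        smul_zero]
  have hTorR : ∀ (r : R) (x : M), Tor x → Tor (r • x) := by
    intro r x hx
    have hr : r ∈ Submodule.span F (Set.range T.of) := by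
      rw [T.span_range_of]; exact Submodule.mem_top
    induction hr using Submodule.span_induction with
    | mem w hw => obtain ⟨a, rfl⟩ := hw; exact hTorofa a x hx
    | zero => rw [zero_smul]; exact hTor0
    | add u v _ _ hu hv => rw [add_smul]; exact hToradd _ _ hu hv
    | smul fc u _ hu => rw [smul_assoc]; exact hTorsmulF fc _ hu
  -- the cyclic module N = R•m consists of torsion elements
  set N : Submodule R M := Submodule.span R {m} with hN
  have hNtor : ∀ x ∈ N, Tor x := by
    intro x hx
    induction hx using Submodule.span_induction with
    | mem w hw => rw [Set.mem_singleton_iff] at hw; rw [hw]; exact hTorm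
    | zero => exact hTor0
    | add u v _ _ hu hv => exact hToradd _ _ hu hv
    | smul r u _ hu => exact hTorR r u hu
  -- M is finitely generated over D
  obtain ⟨s, hs⟩ := hfg
  haveI hMfin : Module.Finite ↥D M := by
    constructor
    refine ⟨Finset.image₂ (fun q (x : M) => T.of (rep q) • x) Finset.univ s, ?_⟩
    rw [eq_top_iff]
    intro y hytop
    clear hytop
    have hy : y ∈ Submodule.span F {x : M | ∃ c ∈ C, ∃ m' ∈ s, x = T.of c • m'} := by
      rw [hs]; exact Submodule.mem_top
    induction hy using Submodule.span_induction with
    | mem w hw =>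
        obtain ⟨c, hc, m', hm', rfl⟩ := hw
        obtain ⟨d, q, heq⟩ := hofdec c hc
        rw [heq, mul_smul, ← hsmulDM]
        exact Submodule.smul_mem _ _
          (Submodule.subset_span (Finset.mem_coe.mpr
            (Finset.mem_image₂.mpr ⟨q, Finset.mem_univ q, m', hm', rfl⟩)))
    | zero => exact Submodule.zero_mem _
    | add u v _ _ hu hv => exact Submodule.add_mem _ hu hv
    | smul fc u _ hu =>
        have h1 : fc • u = (⟨algebraMap F R fc, D.algebraMap_mem fc⟩ : ↥D) • u := by
          rw [hsmulDM, algebraMap_smul]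
        rw [h1]
        exact Submodule.smul_mem _ _ hu
  haveI : IsNoetherian ↥D M := isNoetherian_of_isNoetherianRing_of_finite ↥D M
  -- a single nonzero annihilator for all of N
  have hNDfg : (N.restrictScalars ↥D).FG := IsNoetherian.noetherian _
  obtain ⟨tN, htN⟩ := hNDfg
  have htNtor : ∀ t ∈ tN, Tor t := by
    intro t ht
    apply hNtor
    have h1 : t ∈ N.restrictScalars ↥D := by
      rw [← htN]; exact Submodule.subset_span ht
    exact h1
  have hchoose : ∀ t ∈ tN, ∃ dD : ↥D, (dD : R) ≠ 0 ∧ (dD : R) • t = 0 := by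
    intro t ht
    obtain ⟨d, hdmem, hdne, hd⟩ := htNtor t ht
    exact ⟨⟨d, hdmem⟩, hdne, hd⟩
  set dfun : M → ↥D := fun t =>
    if h : ∃ dD : ↥D, (dD : R) ≠ 0 ∧ (dD : R) • t = 0 then Classical.choose h else 1
    with hdfun
  have hdfunspec : ∀ t ∈ tN, ((dfun t : ↥D) : R) ≠ 0 ∧ ((dfun t : ↥D) : R) • t = 0 := by
    intro t ht
    have h := hchoose t ht
    rw [hdfun]
    simp only [dif_pos h]
    exact Classical.choose_spec h
  set dAll : ↥D := ∏ t ∈ tN, dfun t with hdAll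
  have hdAllne : (dAll : R) ≠ 0 := by
    rw [hdAll]
    exact Finset.prod_induction dfun (fun d : ↥D => (d : R) ≠ 0)
      (fun a b ha hb => by
        have h2 : ((a * b : ↥D) : R) = (a : R) * (b : R) := rfl
        show ((a * b : ↥D) : R) ≠ 0
        rw [h2]; exact hdom _ _ ha hb)
      (by simpa using T.one_ne_zero')
      (fun t ht => (hdfunspec t ht).1)
  have hkill : ∀ t ∈ tN, (dAll : R) • t = 0 := by
    intro t ht
    have h1 : (∏ x ∈ tN.erase t, dfun x) * dfun t = dAll := by
      rw [hdAll]; exact Finset.prod_erase_mul tN dfun ht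
    have h2 : (dAll : R) = ((∏ x ∈ tN.erase t, dfun x : ↥D) : R) * ((dfun t : ↥D) : R) := by
      rw [← h1]; rfl
    rw [h2, mul_smul, (hdfunspec t ht).2, smul_zero]
  have hkillN : ∀ x ∈ N, (dAll : R) • x = 0 := by
    intro x hx
    have hx' : x ∈ Submodule.span ↥D (tN : Set M) := by
      rw [htN]
      exact hx
    clear hx
    induction hx' using Submodule.span_induction with
    | mem w hw => exact hkill w hw
    | zero => exact smul_zero _
    | add u v _ _ hu hv => rw [smul_add, hu, hv, add_zero]
    | smul c u _ hu =>
        rw [hsmulDM, ← mul_smul, T.comm_of_mem_sub hcomm dAll.2 c.2, mul_smul, hu, smul_zero]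
  -- conclude by simplicity of R
  set P : Set R := {r : R | ∀ x ∈ N, r • x = 0} with hP
  have h1P : (1 : R) ∈ P :=
    T.one_mem_of_twoSided hcenter P
      (fun x hxP y hyP => fun z hz => by rw [add_smul, hxP z hz, hyP z hz, add_zero])
      (fun r x hxP => fun z hz => by rw [mul_smul, hxP z hz, smul_zero])
      (fun r x hxP => fun z hz => by rw [mul_smul]; exact hxP _ (N.smul_mem r hz))
      ((dAll : R)) (fun z hz => hkillN z hz) hdAllne
  have hmN : m ∈ N := Submodule.mem_span_singleton_self m
  have hfin := h1P m hmN
  rw [one_smul] at hfin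
  exact hfin
end

section
/- Let F*C be a commutative twisted group algebra of a free abelian group C of rank r over a field F, sitting inside a twisted group algebra F*A where A is free abelian with basis {x₁,…,x_n} extending a basis {x₁,…,x_r} of C. Let F_S be the quotient field of F*C, let R = F(x₁,…,x_r)[x_{r+1},…,x_n] be the localization of F*A at the nonzero elements of F*C, a crossed product of A/C over F_S with [x̄_i, x̄_j] = q_{ij}, and let V be an R-module with dim_{F_S} V = s finite and positive. Then the s-th exterior power Λ^s(V) over F_S is a one-dimensional module over the crossed product R' which has the same underlying data as R except that q'_{ij} = q_{ij}^s for all r < i, j ≤ n (and q'_{ij} = q_{ij} when 1 ≤ i ≤ r). -/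
open scoped ExteriorAlgebra

section TwAux

variable {K : Type*} [Field K] {V : Type*} [AddCommGroup V] [Module K V]

/-- Type synonym twisting the `K`-module structure by a ring endomorphism. -/
def Tw (τ : K →+* K) (W : Type*) : Type _ := W

instance Tw.addCommGroup (τ : K →+* K) (W : Type*) [AddCommGroup W] : AddCommGroup (Tw τ W) :=
  ‹AddCommGroup W›

instance Tw.module (τ : K →+* K) (W : Type*) [AddCommGroup W] [Module K W] :
    Module K (Tw τ W) := Module.compHom W τ

/-- The alternating map `v ↦ (e v₁) ∧ ⋯ ∧ (e v_s)` into the twisted exterior algebra. -/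
def twAlt (s : ℕ) (τ : K ≃+* K) (e : V ≃+ V)
    (h : ∀ (d : K) (v : V), e (d • v) = τ d • e v) :
    V [⋀^Fin s]→ₗ[K] Tw (τ : K →+* K) (ExteriorAlgebra K V) where
  toFun v := ExteriorAlgebra.ιMulti K s fun i => e (v i)
  map_update_add' := by
    intro dec v i x y
    have hdec : dec = instDecidableEqFin s := Subsingleton.elim _ _
    subst hdec
    have hup : ∀ z : V, (fun k => e (Function.update v i z k)) =
        Function.update (fun k => e (v k)) i (e z) := by
      intro z; funext k
      exact Function.apply_update (fun _ w => e w) v i z k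
    simp only [hup, map_add]
    exact (ExteriorAlgebra.ιMulti K s).toMultilinearMap.map_update_add _ i (e x) (e y)
  map_update_smul' := by
    intro dec v i c x
    have hdec : dec = instDecidableEqFin s := Subsingleton.elim _ _
    subst hdec
    have hup : ∀ z : V, (fun k => e (Function.update v i z k)) =
        Function.update (fun k => e (v k)) i (e z) := by
      intro z; funext k
      exact Function.apply_update (fun _ w => e w) v i z k
    simp only [hup, h c x]
    exact (ExteriorAlgebra.ιMulti K s).toMultilinearMap.map_update_smul _ i (τ c) (e x)
  map_eq_zero_of_eq' := by
    intro v i j hv hij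
    exact (ExteriorAlgebra.ιMulti K s).map_eq_zero_of_eq (fun k => e (v k))
      (show e (v i) = e (v j) by rw [hv]) hij

/-- The additive endomorphism of the exterior algebra induced by a `τ`-semilinear
additive automorphism `e` in degree `s` (and zero in other degrees). -/
noncomputable def twHom (s : ℕ) (τ : K ≃+* K) (e : V ≃+ V)
    (h : ∀ (d : K) (v : V), e (d • v) = τ d • e v) :
    ExteriorAlgebra K V →+ ExteriorAlgebra K V where
  toFun x := ExteriorAlgebra.liftAlternating
    (Function.update (fun i => (0 : V [⋀^Fin i]→ₗ[K] Tw (τ : K →+* K) (ExteriorAlgebra K V)))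
      s (twAlt s τ e h)) x
  map_zero' := map_zero _
  map_add' x y := map_add _ x y

theorem twHom_ιMulti (s : ℕ) (τ : K ≃+* K) (e : V ≃+ V)
    (h : ∀ (d : K) (v : V), e (d • v) = τ d • e v) (v : Fin s → V) :
    twHom s τ e h (ExteriorAlgebra.ιMulti K s v) =
      ExteriorAlgebra.ιMulti K s (fun i => e (v i)) := by
  have h1 := ExteriorAlgebra.liftAlternating_apply_ιMulti (R := K) (M := V)
    (N := Tw (τ : K →+* K) (ExteriorAlgebra K V))
    (Function.update (fun i => (0 : V [⋀^Fin i]→ₗ[K] Tw (τ : K →+* K) (ExteriorAlgebra K V)))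
      s (twAlt s τ e h)) v
  rw [Function.update_self] at h1
  exact h1

theorem twHom_smul (s : ℕ) (τ : K ≃+* K) (e : V ≃+ V)
    (h : ∀ (d : K) (v : V), e (d • v) = τ d • e v) (c : K) (x : ExteriorAlgebra K V) :
    twHom s τ e h (c • x) = τ c • twHom s τ e h x :=
  map_smul (ExteriorAlgebra.liftAlternating
    (Function.update (fun i => (0 : V [⋀^Fin i]→ₗ[K] Tw (τ : K →+* K) (ExteriorAlgebra K V)))
      s (twAlt s τ e h))) c x

end TwAux

/-- **The exterior power step in Lemma 3.1.**  Let `F_S = K` be the quotient field of the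
commutative twisted group algebra `F*C`, and let
`R = F(x₁,…,x_r)[x_{r+1},…,x_n]` be the localization of `F*A` at the nonzero elements of
`F*C`, a crossed product of the free abelian group `A/C` (with basis the images of
`x_{r+1}, …, x_n`) over `K` in which `x̄ᵢx̄ⱼ = qᵢⱼ x̄ⱼx̄ᵢ`.  A module `V` over this crossed
product is precisely a `K`-vector space together with additive automorphisms
`u j` (the actions of the units `x̄ⱼ`, `j = r+1, …, n`, indexed here by `Fin m` with
`m = n - r`) that are semilinear with respect to the conjugation automorphisms
`σ j : K ≃+* K` (`d ↦ x̄ⱼ d x̄ⱼ⁻¹`) and satisfy `uᵢ ∘ uⱼ = qᵢⱼ • (uⱼ ∘ uᵢ)` where the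
multiparameters `qᵢⱼ ∈ K^×` are fixed by all the `σ k`.

If `dim_K V = s` is finite and positive, then the `s`-th exterior power `⋀[K]^s V` is
one-dimensional over `K`, and it is a module over the crossed product `R'` which has the
same data as `R` except that the multiparameters are `q'ᵢⱼ = qᵢⱼ^s` for `r < i, j ≤ n`
(and `q'ᵢⱼ = qᵢⱼ` for `1 ≤ i ≤ r`, i.e. the `K = F(x₁,…,x_r)`-structure is unchanged):
concretely, the maps `U j` induced functorially by the `u j` on `⋀[K]^s V` (sending the
wedge `v₁ ∧ ⋯ ∧ v_s` to `u j v₁ ∧ ⋯ ∧ u j v_s`) are `σ j`-semilinear and satisfy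
`Uᵢ ∘ Uⱼ = qᵢⱼ^s • (Uⱼ ∘ Uᵢ)`. -/
theorem exteriorPower_one_dim_module_over_power_cocycle
    {K : Type*} [Field K] {V : Type*} [AddCommGroup V] [Module K V]
    {m s : ℕ} (hs : 0 < s) [FiniteDimensional K V] (hdim : Module.finrank K V = s)
    (σ : Fin m → (K ≃+* K))
    (u : Fin m → (V ≃+ V))
    (hsemi : ∀ (j : Fin m) (d : K) (v : V), u j (d • v) = σ j d • u j v)
    (q : Fin m → Fin m → Kˣ)
    (hfix : ∀ (k i j : Fin m), σ k (q i j) = q i j)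
    (hrel : ∀ (i j : Fin m) (v : V), u i (u j v) = (q i j : K) • u j (u i v)) :
    Module.finrank K (⋀[K]^s V) = 1 ∧
    ∃ U : Fin m → ((⋀[K]^s V) ≃+ (⋀[K]^s V)),
      (∀ (j : Fin m) (d : K) (w : ⋀[K]^s V), U j (d • w) = σ j d • U j w) ∧
      (∀ (j : Fin m) (v : Fin s → V),
        ((U j ⟨ExteriorAlgebra.ιMulti K s v,
            ExteriorAlgebra.ιMulti_range K s (Set.mem_range_self v)⟩ : ⋀[K]^s V)
          : ExteriorAlgebra K V)
          = ExteriorAlgebra.ιMulti K s (fun i => u j (v i))) ∧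
      (∀ (i j : Fin m) (w : ⋀[K]^s V), U i (U j w) = ((q i j : K) ^ s) • U j (U i w)) := by
  classical
  -- a basis of `V` indexed by `Fin s`
  let b : Module.Basis (Fin s) K V := Module.finBasisOfFinrankEq K V hdim
  set ω : ExteriorAlgebra K V := ExteriorAlgebra.ιMulti K s ⇑b with hω
  -- every wedge is a multiple of the basis wedge
  have hexp : ∀ v : Fin s → V,
      ExteriorAlgebra.ιMulti K s v = b.det v • ω := by
    have hfg : (ExteriorAlgebra.ιMulti K s : V [⋀^Fin s]→ₗ[K] ExteriorAlgebra K V) =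
        (LinearMap.toSpanSingleton K (ExteriorAlgebra K V) ω).compAlternatingMap b.det := by
      refine Module.Basis.ext_alternating b ?_
      intro i hi
      have hbij : Function.Bijective i := Finite.injective_iff_bijective.1 hi
      let e : Equiv.Perm (Fin s) := Equiv.ofBijective i hbij
      have h1 : (fun k => b (i k)) = ⇑b ∘ e := rfl
      rw [h1, AlternatingMap.map_perm, LinearMap.compAlternatingMap_apply,
        AlternatingMap.map_perm, Module.Basis.det_self, LinearMap.toSpanSingleton_apply]
      simp [hω]
    intro v
    have := congrArg (fun f : V [⋀^Fin s]→ₗ[K] ExteriorAlgebra K V => f v) hfg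
    simpa [LinearMap.toSpanSingleton_apply] using this
  -- the basis wedge is nonzero
  have hω0 : ω ≠ 0 := by
    intro h0
    have h1 := ExteriorAlgebra.liftAlternating_apply_ιMulti
      (R := K) (M := V) (N := K)
      (Function.update (fun i => (0 : V [⋀^Fin i]→ₗ[K] K)) s b.det) ⇑b
    rw [← hω, h0, map_zero, Function.update_self, Module.Basis.det_self] at h1
    exact one_ne_zero h1.symm
  -- the exterior power is the span of the basis wedge
  have hspan : ⋀[K]^s V = Submodule.span K {ω} := by
    refine le_antisymm ?_ ?_
    · rw [← ExteriorAlgebra.ιMulti_span_fixedDegree]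
      rw [Submodule.span_le]
      rintro _ ⟨v, rfl⟩
      rw [hexp v]
      exact Submodule.smul_mem _ _ (Submodule.mem_span_singleton_self ω)
    · rw [Submodule.span_le, Set.singleton_subset_iff]
      exact ExteriorAlgebra.ιMulti_range K s (Set.mem_range_self _)
  have hcoord : ∀ x : ExteriorAlgebra K V, x ∈ ⋀[K]^s V → ∃ c : K, x = c • ω := by
    intro x hx
    rw [hspan] at hx
    obtain ⟨c, hc⟩ := Submodule.mem_span_singleton.1 hx
    exact ⟨c, hc.symm⟩
  refine ⟨by rw [hspan]; exact finrank_span_singleton hω0, ?_⟩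
  -- the σ's commute
  have hne : ∀ (j : Fin m) (v : V), v ≠ 0 → u j v ≠ 0 := by
    intro j v hv h0
    exact hv (by simpa using (u j).injective (by simpa using h0))
  have hcomm : ∀ (i j : Fin m) (d : K), σ i (σ j d) = σ j (σ i d) := by
    intro i j d
    have hv0 : b ⟨0, hs⟩ ≠ 0 := b.ne_zero _
    have hx : u i (u j (b ⟨0, hs⟩)) ≠ 0 := hne i _ (hne j _ hv0)
    have h1 : u i (u j (d • b ⟨0, hs⟩)) = σ i (σ j d) • u i (u j (b ⟨0, hs⟩)) := by
      rw [hsemi j, hsemi i]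
    have h2 : u i (u j (d • b ⟨0, hs⟩)) = σ j (σ i d) • u i (u j (b ⟨0, hs⟩)) := by
      rw [hrel i j, hsemi i, hsemi j, smul_comm, ← hrel i j]
    exact smul_left_injective K hx (h1.symm.trans h2)
  -- inverse semilinearity
  have hsemi' : ∀ (j : Fin m) (d : K) (v : V),
      (u j).symm (d • v) = (σ j).symm d • (u j).symm v := by
    intro j d v
    apply (u j).injective
    rw [AddEquiv.apply_symm_apply, hsemi j, RingEquiv.apply_symm_apply,
      AddEquiv.apply_symm_apply]
  -- membership preservation
  have hEmem : ∀ (j : Fin m) (x : ExteriorAlgebra K V), x ∈ ⋀[K]^s V →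
      twHom s (σ j) (u j) (hsemi j) x ∈ ⋀[K]^s V := by
    intro j x hx
    obtain ⟨c, hc⟩ := hcoord x hx
    rw [hc, hω, twHom_smul, twHom_ιMulti]
    exact Submodule.smul_mem _ _ (ExteriorAlgebra.ιMulti_range K s (Set.mem_range_self _))
  have hE'mem : ∀ (j : Fin m) (x : ExteriorAlgebra K V), x ∈ ⋀[K]^s V →
      twHom s (σ j).symm (u j).symm (hsemi' j) x ∈ ⋀[K]^s V := by
    intro j x hx
    obtain ⟨c, hc⟩ := hcoord x hx
    rw [hc, hω, twHom_smul, twHom_ιMulti]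
    exact Submodule.smul_mem _ _ (ExteriorAlgebra.ιMulti_range K s (Set.mem_range_self _))
  -- composition identities
  have hEE' : ∀ (j : Fin m) (x : ExteriorAlgebra K V), x ∈ ⋀[K]^s V →
      twHom s (σ j) (u j) (hsemi j) (twHom s (σ j).symm (u j).symm (hsemi' j) x) = x := by
    intro j x hx
    obtain ⟨c, hc⟩ := hcoord x hx
    rw [hc, hω, twHom_smul, twHom_ιMulti, twHom_smul, twHom_ιMulti]
    simp
  have hE'E : ∀ (j : Fin m) (x : ExteriorAlgebra K V), x ∈ ⋀[K]^s V →
      twHom s (σ j).symm (u j).symm (hsemi' j) (twHom s (σ j) (u j) (hsemi j) x) = x := by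
    intro j x hx
    obtain ⟨c, hc⟩ := hcoord x hx
    rw [hc, hω, twHom_smul, twHom_ιMulti, twHom_smul, twHom_ιMulti]
    simp
  -- assemble the equivalences
  refine ⟨fun j =>
    { toFun := fun w => ⟨twHom s (σ j) (u j) (hsemi j) w, hEmem j w w.2⟩
      invFun := fun w => ⟨twHom s (σ j).symm (u j).symm (hsemi' j) w, hE'mem j w w.2⟩
      left_inv := fun w => Subtype.ext (hE'E j w w.2)
      right_inv := fun w => Subtype.ext (hEE' j w w.2)
      map_add' := fun w₁ w₂ => Subtype.ext (map_add _ _ _) }, ?_, ?_, ?_⟩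
  · intro j d w
    refine Subtype.ext ?_
    show twHom s (σ j) (u j) (hsemi j) ((d • w : ⋀[K]^s V) : ExteriorAlgebra K V) =
      σ j d • twHom s (σ j) (u j) (hsemi j) (w : ExteriorAlgebra K V)
    rw [Submodule.coe_smul]
    exact twHom_smul s (σ j) (u j) (hsemi j) d _
  · intro j v
    exact twHom_ιMulti s (σ j) (u j) (hsemi j) v
  · intro i j w
    refine Subtype.ext ?_
    obtain ⟨c, hc⟩ := hcoord w w.2
    show twHom s (σ i) (u i) (hsemi i) (twHom s (σ j) (u j) (hsemi j) (w : ExteriorAlgebra K V)) =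
      ((q i j : K) ^ s) •
        twHom s (σ j) (u j) (hsemi j) (twHom s (σ i) (u i) (hsemi i) (w : ExteriorAlgebra K V))
    rw [hc, hω, twHom_smul, twHom_ιMulti, twHom_smul, twHom_ιMulti,
      twHom_smul, twHom_ιMulti, twHom_smul, twHom_ιMulti]
    have hsw : ExteriorAlgebra.ιMulti K s (fun k => u i (u j (b k))) =
        ((q i j : K) ^ s) • ExteriorAlgebra.ιMulti K s (fun k => u j (u i (b k))) := by
      have h1 : (fun k => u i (u j (b k))) =
          fun k => (q i j : K) • (u j (u i (b k))) := funext fun k => hrel i j (b k)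
      rw [h1]
      have h2 := (ExteriorAlgebra.ιMulti K s (M := V)).toMultilinearMap.map_smul_univ
        (fun _ => (q i j : K)) (fun k => u j (u i (b k)))
      simpa [Finset.prod_const] using h2
    rw [hsw, hcomm i j, smul_comm]
end

section
/- Let F*A be a twisted group algebra of a free abelian group A with basis {x₁,…,x_n} over a field F, with x̄_i x̄_j = q_{ij} x̄_j x̄_i, and let C be the subgroup generated by x₁,…,x_r with F*C commutative. Fix an integer s > 0 and let λ' be the cocycle obtained from the cocycle of F*A by setting q'_{ij} = q_{ij} for 1 ≤ i ≤ r and q'_{ij} = q_{ij}^s for r < i, j ≤ n. If there exist monomials μ_j ∈ F*C (j = r+1,…,n) such that the elements μ_j x̄_j pairwise commute with respect to the multiplication twisted by λ', then the elements μ_j x̄_j^s (j = r+1,…,n) pairwise commute in F*A itself. -/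
open Module Filter ENNReal

/-- The commutation pairing of a twisted group algebra: the scalar `λ(a,b)·λ(b,a)⁻¹ ∈ Fˣ`
with `ā·b̄ = (pairing a b) • (b̄·ā)`. -/
def TwistedGroupAlgebra.pairing {F A R : Type*} [Field F] [AddCommGroup A] [Ring R]
    [Algebra F R] (T : TwistedGroupAlgebra F A R) (a b : A) : Fˣ :=
  T.cocycle a b * (T.cocycle b a)⁻¹

namespace TwistedGroupAlgebra

variable {F A R : Type*} [Field F] [AddCommGroup A] [Ring R] [Algebra F R]
variable (T : TwistedGroupAlgebra F A R)

lemma smul_cancel {α β : F} (a : A) (h : α • T.of a = β • T.of a) : α = β := by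
  rw [← T.basis_eq] at h
  have h2 := congrArg (fun v => T.basis.repr v a) h
  simpa using h2

lemma cocycle_identity (a b c : A) :
    (T.cocycle a b : F) * (T.cocycle (a + b) c : F)
      = (T.cocycle b c : F) * (T.cocycle a (b + c) : F) := by
  have h : (T.of a * T.of b) * T.of c = T.of a * (T.of b * T.of c) := mul_assoc _ _ _
  rw [T.of_mul a b, smul_mul_assoc, T.of_mul (a + b) c, T.of_mul b c, mul_smul_comm,
    T.of_mul a (b + c), smul_smul, smul_smul, ← add_assoc] at h
  exact T.smul_cancel _ h

lemma pairing_val (a b : A) :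
    (T.pairing a b : F) = (T.cocycle a b : F) * (T.cocycle b a : F)⁻¹ := by
  simp [pairing]

lemma pairing_add_left (a b c : A) :
    T.pairing (a + b) c = T.pairing a c * T.pairing b c := by
  have J1 := T.cocycle_identity a b c
  have J2 := T.cocycle_identity c a b
  have J3 := T.cocycle_identity a c b
  rw [add_comm a c, add_comm c b] at J3
  ext
  rw [Units.val_mul, pairing_val, pairing_val, pairing_val]
  have n1 : (T.cocycle c (a + b) : F) ≠ 0 := Units.ne_zero _
  have n2 : (T.cocycle c a : F) ≠ 0 := Units.ne_zero _
  have n3 : (T.cocycle c b : F) ≠ 0 := Units.ne_zero _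
  have n4 : (T.cocycle a b : F) ≠ 0 := Units.ne_zero _
  have n5 : (T.cocycle a (b + c) : F) ≠ 0 := Units.ne_zero _
  field_simp
  apply mul_right_cancel₀ (mul_ne_zero n4 n5)
  linear_combination ((T.cocycle c a : F) * (T.cocycle c b : F) * (T.cocycle a (b + c) : F)) * J1
    + ((T.cocycle b c : F) * (T.cocycle a (b + c) : F) * (T.cocycle a c : F)) * J2
    - ((T.cocycle b c : F) * (T.cocycle a (b + c) : F) * (T.cocycle c a : F)) * J3


lemma pairing_symm (a b : A) : T.pairing b a = (T.pairing a b)⁻¹ := by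
  simp [pairing, mul_inv_rev, mul_comm]

lemma pairing_add_right (a b c : A) :
    T.pairing a (b + c) = T.pairing a b * T.pairing a c := by
  rw [T.pairing_symm (b + c) a, T.pairing_add_left b c a, mul_inv,
    ← T.pairing_symm b a, ← T.pairing_symm c a]

/-- The pairing with fixed right argument, as a homomorphism. -/
def lhom (c : A) : A →+ Additive Fˣ :=
  AddMonoidHom.mk' (fun a => Additive.ofMul (T.pairing a c))
    (fun a b => congrArg Additive.ofMul (T.pairing_add_left a b c))

/-- The pairing with fixed left argument, as a homomorphism. -/
def rhom (a : A) : A →+ Additive Fˣ :=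
  AddMonoidHom.mk' (fun b => Additive.ofMul (T.pairing a b))
    (fun b c => congrArg Additive.ofMul (T.pairing_add_right a b c))

lemma pairing_nsmul_right (a b : A) (s : ℕ) :
    T.pairing a (s • b) = (T.pairing a b) ^ s := by
  have := (T.rhom a).map_nsmul s b
  simpa [rhom, ← ofMul_pow] using this

lemma smul_mul_smul_of (α β : Fˣ) (a b : A) :
    ((α : F) • T.of a) * ((β : F) • T.of b)
      = (((α * β * T.cocycle a b : Fˣ) : F)) • T.of (a + b) := by
  rw [smul_mul_assoc, mul_smul_comm, T.of_mul, smul_smul, smul_smul]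
  push_cast
  ring_nf

lemma commute_smul_of_iff (α β : Fˣ) (a b : A) :
    Commute ((α : F) • T.of a) ((β : F) • T.of b) ↔ T.pairing a b = 1 := by
  rw [Commute, SemiconjBy, T.smul_mul_smul_of α β a b, T.smul_mul_smul_of β α b a,
    add_comm b a]
  constructor
  · intro h
    have h2 := T.smul_cancel _ h
    have h3 : (T.cocycle a b : F) = (T.cocycle b a : F) := by
      have hα : (α : F) ≠ 0 := Units.ne_zero _
      have hβ : (β : F) ≠ 0 := Units.ne_zero _
      push_cast at h2
      apply mul_left_cancel₀ hα
      apply mul_left_cancel₀ hβ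
      linear_combination h2
    have h4 : T.cocycle a b = T.cocycle b a := Units.ext h3
    rw [pairing, h4, mul_inv_cancel]
  · intro h
    have h4 : T.cocycle a b = T.cocycle b a := by
      have := mul_eq_one_iff_eq_inv.mp h
      rwa [inv_inv] at this
    rw [h4, mul_comm α β]

lemma commute_of_pairing_eq_one {u v : R} (α β : Fˣ) (a b : A)
    (hu : u = (α : F) • T.of a) (hv : v = (β : F) • T.of b)
    (h : T.pairing a b = 1) : Commute u v := by
  rw [hu, hv]
  exact (T.commute_smul_of_iff α β a b).mpr h


lemma smul_of_mul_of (α : Fˣ) (a b : A) :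
    ((α : F) • T.of a) * T.of b = ((α * T.cocycle a b : Fˣ) : F) • T.of (a + b) := by
  rw [smul_mul_assoc, T.of_mul, smul_smul]
  push_cast
  ring_nf

lemma pairing_nsmul_left (a b : A) (s : ℕ) :
    T.pairing (s • a) b = (T.pairing a b) ^ s := by
  rw [T.pairing_symm b (s • a), T.pairing_nsmul_right b a s, ← inv_pow, ← T.pairing_symm b a]

end TwistedGroupAlgebra

/-- **The cocycle-power step in Lemma 3.1.**  Let `F*A` be a twisted group algebra of the free
abelian group `A` with `ℤ`-basis `x₁, …, xₙ`, let `C = ⟨x₁, …, x_r⟩` with `F*C` commutative,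
and let `s > 0`.  Let `F*'A` (realized on a ring `R'`) be a twisted group algebra of `A` whose
cocycle `λ'` has commutation values `q'ᵢⱼ = qᵢⱼ` whenever `i ≤ r` or `j ≤ r`, and
`q'ᵢⱼ = qᵢⱼ^s` for `i, j > r` (this is the cocycle of the paper obtained by raising the
`x`-part of the cocycle to its `s`-th power).  If there are monomials `μⱼ = κⱼ·c̄ⱼ ∈ F*C`
(`j = r+1, …, n`) such that the elements `μⱼ·x̄ⱼ` pairwise commute with respect to the
multiplication twisted by `λ'`, then the elements `μⱼ·x̄ⱼˢ` pairwise commute in `F*A`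
itself. -/
theorem commute_pow_of_commute_twisted
    {F A R R' : Type*} [Field F]
    [AddCommGroup A] [Module.Free ℤ A] [Module.Finite ℤ A]
    [Ring R] [Algebra F R] (T : TwistedGroupAlgebra F A R)
    [Ring R'] [Algebra F R'] (T' : TwistedGroupAlgebra F A R')
    {n r : ℕ} (hrn : r ≤ n) (x : Basis (Fin n) ℤ A)
    (C : AddSubgroup A)
    (hCbasis : C = AddSubgroup.closure (Set.range fun i : Fin r => x (Fin.castLE hrn i)))
    (hcomm : T.IsCommutativeOn C)
    (s : ℕ) (hs : 0 < s)
    (hpair_low : ∀ i j : Fin n, (i : ℕ) < r ∨ (j : ℕ) < r →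
      T'.pairing (x i) (x j) = T.pairing (x i) (x j))
    (hpair_high : ∀ i j : Fin n, r ≤ (i : ℕ) → r ≤ (j : ℕ) →
      T'.pairing (x i) (x j) = (T.pairing (x i) (x j)) ^ s)
    (κ : Fin n → Fˣ) (c : Fin n → A) (hc : ∀ j : Fin n, c j ∈ C)
    (hcommute' : ∀ i j : Fin n, r ≤ (i : ℕ) → r ≤ (j : ℕ) →
      Commute (((κ i : F) • T'.of (c i)) * T'.of (x i))
              (((κ j : F) • T'.of (c j)) * T'.of (x j))) :
    ∀ i j : Fin n, r ≤ (i : ℕ) → r ≤ (j : ℕ) →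
      Commute (((κ i : F) • T.of (c i)) * T.of (x i) ^ s)
              (((κ j : F) • T.of (c j)) * T.of (x j) ^ s) := by
  intro i j hi hj
  have hmem : ∀ a : A, a ∈ AddSubgroup.closure (Set.range x) := by
    intro a
    rw [← Submodule.span_int_eq_addSubgroupClosure, x.span_eq]
    trivial
  have Llow : ∀ k : Fin n, (k : ℕ) < r → ∀ a : A,
      T'.pairing a (x k) = T.pairing a (x k) := by
    intro k hk a
    have heq : Set.EqOn (T'.lhom (x k)) (T.lhom (x k)) (Set.range x) := by
      rintro _ ⟨i0, rfl⟩
      simpa [TwistedGroupAlgebra.lhom] using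
        congrArg Additive.ofMul (hpair_low i0 k (Or.inr hk))
    have h2 := AddMonoidHom.eqOn_closure heq (hmem a)
    simpa [TwistedGroupAlgebra.lhom] using h2
  have L1 : ∀ b ∈ C, ∀ a : A, T'.pairing a b = T.pairing a b := by
    intro b hb a
    have heq : Set.EqOn (T'.rhom a) (T.rhom a)
        (Set.range fun i0 : Fin r => x (Fin.castLE hrn i0)) := by
      rintro _ ⟨i0, rfl⟩
      have hk : ((Fin.castLE hrn i0 : Fin n) : ℕ) < r := by simpa using i0.isLt
      simpa [TwistedGroupAlgebra.rhom] using
        congrArg Additive.ofMul (Llow (Fin.castLE hrn i0) hk a)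
    have hbmem : b ∈ AddSubgroup.closure
        (Set.range fun i0 : Fin r => x (Fin.castLE hrn i0)) := hCbasis ▸ hb
    have h2 := AddMonoidHom.eqOn_closure heq hbmem
    simpa [TwistedGroupAlgebra.rhom] using h2
  have L2 : ∀ a ∈ C, ∀ b : A, T'.pairing a b = T.pairing a b := by
    intro a ha b
    rw [T'.pairing_symm b a, L1 a ha b, ← T.pairing_symm b a]
  have L3 : ∀ c₁ ∈ C, ∀ c₂ ∈ C, T.pairing c₁ c₂ = 1 := by
    intro c₁ h₁ c₂ h₂
    exact (T.commute_smul_of_iff 1 1 c₁ c₂).mp (by simpa using hcomm c₁ h₁ c₂ h₂)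
  have key' : T'.pairing (c i + x i) (c j + x j) = 1 := by
    have hcom := hcommute' i j hi hj
    rw [T'.smul_of_mul_of (κ i) (c i) (x i), T'.smul_of_mul_of (κ j) (c j) (x j)] at hcom
    exact (T'.commute_smul_of_iff _ _ _ _).mp hcom
  have pow_of : ∀ (m : ℕ) (a : A), ∃ π : Fˣ, T.of a ^ m = (π : F) • T.of (m • a) := by
    intro m a
    induction m with
    | zero => exact ⟨1, by simp [T.of_zero, zero_nsmul]⟩
    | succ k ih =>
      obtain ⟨π, hπ⟩ := ih
      refine ⟨π * T.cocycle (k • a) a, ?_⟩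
      rw [pow_succ, hπ, T.smul_of_mul_of, succ_nsmul]
  have e1 : T.pairing (c i) (c j) = 1 := L3 _ (hc i) _ (hc j)
  have e1' : T'.pairing (c i) (c j) = 1 := by rw [L2 (c i) (hc i) (c j)]; exact e1
  have e2 : T'.pairing (c i) (x j) = T.pairing (c i) (x j) := L2 _ (hc i) _
  have e3 : T'.pairing (x i) (c j) = T.pairing (x i) (c j) := L1 _ (hc j) _
  have e4 : T'.pairing (x i) (x j) = T.pairing (x i) (x j) ^ s := hpair_high i j hi hj
  have key2 : T.pairing (c i) (x j) * T.pairing (x i) (c j)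
      * T.pairing (x i) (x j) ^ s = 1 := by
    rw [T'.pairing_add_left, T'.pairing_add_right, T'.pairing_add_right,
      e1', e2, e3, e4, one_mul] at key'
    rw [← key', mul_assoc]
  have main : T.pairing (c i + s • x i) (c j + s • x j) = 1 := by
    have hk := congrArg (· ^ s) key2
    simp only [mul_pow, one_pow] at hk
    simp only [T.pairing_add_left, T.pairing_add_right, T.pairing_nsmul_left,
      T.pairing_nsmul_right, e1, one_mul]
    simpa [mul_assoc] using hk
  obtain ⟨πi, hπi⟩ := pow_of s (x i)
  obtain ⟨πj, hπj⟩ := pow_of s (x j)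
  rw [hπi, hπj, T.smul_mul_smul_of, T.smul_mul_smul_of]
  exact (T.commute_smul_of_iff _ _ _ _).mpr main
end
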